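/- arXiv:2401.04604 — 5 statements merged into one kernel-verified Lean document; each statement's English description precedes it below -/
import Mathlib

section
/- Every automorphism α of G = GL₂(F₂[t]) is the composite of an inner automorphism and a Reiner automorphism: there exist g ∈ GL₂(F₂[t]), a group automorphism τ of GL₂(F₂[t]), and an additive group automorphism φ of F₂[t] with φ(1) = 1, such that τ(M) = M for every M in the embedded subgroup GL₂(F₂), τ(u(a)) = u(φ(a)) for every a ∈ F₂[t], and α(X) = g·τ(X)·g⁻¹ for all X ∈ GL₂(F₂[t]). -/
/-- The unipotent element `u(a) = [[1,a],[0,1]]` of `GL₂(R)`. -/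
noncomputable def unip {R : Type*} [CommRing R] (a : R) :
    Matrix.GeneralLinearGroup (Fin 2) R :=
  ⟨!![1, a; 0, 1], !![1, -a; 0, 1],
    by simp [Matrix.mul_fin_two, Matrix.one_fin_two],
    by simp [Matrix.mul_fin_two, Matrix.one_fin_two]⟩

/-- The embedding `GL₂(F) →* GL₂(F[t])` induced by the constant-polynomial map. -/
noncomputable def embGL2 (F : Type*) [CommRing F] :
    Matrix.GeneralLinearGroup (Fin 2) F →* Matrix.GeneralLinearGroup (Fin 2) (Polynomial F) :=
  Matrix.GeneralLinearGroup.map (Polynomial.C : F →+* Polynomial F)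



abbrev R2 : Type := Polynomial (ZMod 2)
abbrev G2 : Type := Matrix.GeneralLinearGroup (Fin 2) R2

lemma two_eq_zero : (2 : R2) = 0 := by
  have : ((2:ℕ) : R2) = 0 := by
    rw [← Polynomial.C_eq_natCast]
    norm_num
    decide
  simpa using this

lemma unit_eq_one (r : R2) (h : IsUnit r) : r = 1 := by
  rw [Polynomial.isUnit_iff] at h
  obtain ⟨u, hu, rfl⟩ := h
  have : u = 1 := by revert hu; revert u; decide
  simp [this]

example (a : R2) : (unip a).val = !![1,a;0,1] := rfl

lemma unip_mul (a b : R2) : unip a * unip b = unip (a + b) := by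
  ext : 1
  show (unip a).val * (unip b).val = (unip (a+b)).val
  simp [unip, Matrix.mul_fin_two, add_comm]

lemma unip_inj {a b : R2} (h : unip a = unip b) : a = b := by
  have := congrArg (fun X : G2 => X.val 0 1) h
  simpa [unip] using this

lemma unip_zero : unip (0 : R2) = 1 := by
  ext : 1
  simp [unip, Matrix.one_fin_two]

lemma unip_sq (a : R2) : unip a * unip a = 1 := by
  rw [unip_mul]
  have : a + a = 0 := by linear_combination a * two_eq_zero
  rw [this, unip_zero]

lemma det_eq_one (X : G2) : (X.val).det = 1 := by
  apply unit_eq_one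
  exact (Matrix.isUnit_iff_isUnit_det X.val).mp X.isUnit

lemma entries_eq (X : G2) : X.val = !![X.val 0 0, X.val 0 1; X.val 1 0, X.val 1 1] :=
  Matrix.eta_fin_two X.val

lemma mat2_eq {α : Type*} {a b c d a' b' c' d' : α}
    (h1 : a = a') (h2 : b = b') (h3 : c = c') (h4 : d = d') :
    !![a,b;c,d] = !![a',b';c',d'] := by
  subst h1 h2 h3 h4; rfl

lemma inv_form (X : G2) (h : X * X = 1) :
    X.val 1 1 = X.val 0 0 ∧ X.val 0 0 * X.val 0 0 + X.val 0 1 * X.val 1 0 = 1 := by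
  have hv : X.val * X.val = 1 := congrArg Units.val h
  set a := X.val 0 0 with ha
  set b := X.val 0 1 with hb
  set c := X.val 1 0 with hc
  set d := X.val 1 1 with hd
  have hv' : !![a,b;c,d] * !![a,b;c,d] = 1 := by rw [← entries_eq X]; exact hv
  rw [Matrix.mul_fin_two] at hv'
  have h00 : a*a + b*c = 1 := by
    have := congrFun (congrFun hv' 0) 0; simpa using this
  have h11 : c*b + d*d = 1 := by
    have := congrFun (congrFun hv' 1) 1; simpa using this
  have hdet : a * d - b * c = 1 := by
    have := det_eq_one X
    rw [Matrix.det_fin_two] at this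
    exact this
  have had : (a - d)^2 = 0 := by
    linear_combination h00 - h11 + (d*d - a*d)*two_eq_zero
  have : a - d = 0 := by
    exact pow_eq_zero_iff (by norm_num) |>.mp had
  have had' : d = a := (sub_eq_zero.mp this).symm
  refine ⟨had', ?_⟩
  have h2 : a - d = 0 := this
  linear_combination hdet + b*c*two_eq_zero + a * h2

lemma conj_unip (X : G2) (h : X * X = 1) (hne : X ≠ 1) :
    ∃ (H : G2) (d : R2), d ≠ 0 ∧ X * H = H * unip d := by
  obtain ⟨h11, hdet⟩ := inv_form X h
  set a := X.val 0 0 with ha0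
  set b := X.val 0 1 with hb0
  set c := X.val 1 0 with hc0
  have hX : X.val = !![a, b; c, a] := by
    rw [entries_eq X, h11]
  by_cases hc : c = 0
  · -- upper triangular case
    have ha1 : (a - 1)^2 = 0 := by
      rw [hc] at hdet
      linear_combination hdet + (1 - a) * two_eq_zero
    have ha1' : a = 1 := by
      have := pow_eq_zero_iff (n := 2) (by norm_num) |>.mp ha1
      linear_combination this
    have hXb : X = unip b := by
      ext : 1
      rw [hX, ha1', hc]
      rfl
    refine ⟨1, b, ?_, by rw [hXb, mul_one, one_mul]⟩
    intro hb
    exact hne (by rw [hXb, hb, unip_zero])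
  · -- main case
    set e := a + 1 with he0
    have he2 : e * e = b * c := by
      linear_combination hdet + (1 + a - b*c) * two_eq_zero
    set p0 := EuclideanDomain.gcd e c with hp0def
    have hp0 : p0 ≠ 0 := by
      intro hz
      exact hc (EuclideanDomain.gcd_eq_zero_iff.mp hz).2
    obtain ⟨e1, he1⟩ : p0 ∣ e := EuclideanDomain.gcd_dvd_left e c
    obtain ⟨c1, hc1⟩ : p0 ∣ c := EuclideanDomain.gcd_dvd_right e c
    have hc1ne : c1 ≠ 0 := by
      intro hz; exact hc (by rw [hc1, hz, mul_zero])
    set A := EuclideanDomain.gcdA e c with hAdef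
    set B := EuclideanDomain.gcdB e c with hBdef
    have hbezout : p0 = e * A + c * B := EuclideanDomain.gcd_eq_gcd_ab e c
    have hbz1 : e1 * A + c1 * B = 1 := by
      apply mul_left_cancel₀ hp0
      linear_combination -hbezout - A * he1 - B * hc1
    have hkey : p0 * (e1 * e1) = b * c1 := by
      apply mul_left_cancel₀ hp0
      linear_combination he2 - (e + p0*e1) * he1 + b * hc1
    set q := b*A*A + p0*c1*B*B with hqdef
    have hq : p0 = c1 * q := by
      linear_combination (A*A)*hkey + (p0*(e1*A+c1*B+1))*hbz1 + (p0 - p0*A^2*e1^2 - p0*c1^2*B^2 - p0*e1*A*c1*B)*two_eq_zero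
    have hb : b = q*(e1*e1) := by
      apply mul_left_cancel₀ hc1ne
      linear_combination -hkey - (e1*e1) * hq + (p0*e1^2 - c1*q*e1^2)*two_eq_zero
    have hcq : c = q*(c1*c1) := by
      linear_combination hc1 + c1 * hq
    have haq : a = 1 + q*(c1*e1) := by
      linear_combination he1 + e1 * hq - two_eq_zero
    have hqne : q ≠ 0 := by
      intro hz; exact hc (by rw [hcq, hz, zero_mul])
    refine ⟨⟨!![e1, B; c1, A], !![A, B; c1, e1], ?_, ?_⟩, q, hqne, ?_⟩
    · rw [Matrix.mul_fin_two, Matrix.one_fin_two]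
      refine mat2_eq ?_ ?_ ?_ ?_
      · linear_combination hbz1
      · linear_combination (e1*B)*two_eq_zero
      · linear_combination (c1*A)*two_eq_zero
      · linear_combination hbz1
    · rw [Matrix.mul_fin_two, Matrix.one_fin_two]
      refine mat2_eq ?_ ?_ ?_ ?_
      · linear_combination hbz1
      · linear_combination (A*B)*two_eq_zero
      · linear_combination (c1*e1)*two_eq_zero
      · linear_combination hbz1
    · ext : 1
      show X.val * !![e1, B; c1, A] = !![e1, B; c1, A] * (unip q).val
      rw [hX]
      show _ = !![e1, B; c1, A] * !![1, q; 0, 1]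
      rw [Matrix.mul_fin_two, Matrix.mul_fin_two]
      refine mat2_eq ?_ ?_ ?_ ?_
      · linear_combination e1 * haq + c1 * hb + (q*c1*e1*e1) * two_eq_zero
      · linear_combination B * haq + A * hb + (q*e1) * hbz1
      · linear_combination e1 * hcq + c1 * haq + (q*c1*c1*e1) * two_eq_zero
      · linear_combination B * hcq + A * haq + (q*c1) * hbz1

lemma centralizer_unip (d : R2) (hd : d ≠ 0) (g : G2)
    (hg : g * unip d = unip d * g) : ∃ b, g = unip b := by
  have hv : g.val * (unip d).val = (unip d).val * g.val := congrArg Units.val hg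
  set a := g.val 0 0 with ha0
  set b := g.val 0 1 with hb0
  set c := g.val 1 0 with hc0
  set e := g.val 1 1 with he0
  have hv' : !![a,b;c,e] * !![1,d;0,1] = !![1,d;0,1] * !![a,b;c,e] := by
    rw [← entries_eq g]; exact hv
  rw [Matrix.mul_fin_two, Matrix.mul_fin_two] at hv'
  have h00 : a * 1 + b * 0 = 1 * a + d * c := by
    have := congrFun (congrFun hv' 0) 0; simpa using this
  have h01 : a * d + b * 1 = 1 * b + d * e := by
    have := congrFun (congrFun hv' 0) 1; simpa using this
  have hc : c = 0 := by
    have hdc : d * c = 0 := by linear_combination -h00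
    rcases mul_eq_zero.mp hdc with h | h
    · exact absurd h hd
    · exact h
  have hae' : a = e := by
    have : d * (a - e) = 0 := by linear_combination h01
    rcases mul_eq_zero.mp this with h | h
    · exact absurd h hd
    · linear_combination h
  have hdetg : a * e - b * c = 1 := by
    have := det_eq_one g
    rw [entries_eq g, Matrix.det_fin_two] at this
    simpa using this
  have ha2 : a * a = 1 := by linear_combination hdetg + a * hae' + b * hc
  have ha1 : a = 1 := by
    have h' : (a - 1)^2 = 0 := by linear_combination ha2 + (1 - a) * two_eq_zero
    have := pow_eq_zero_iff (n := 2) (by norm_num) |>.mp h'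
    linear_combination this
  refine ⟨b, ?_⟩
  ext : 1
  rw [entries_eq g, ← ha0, ← hb0, ← hc0, ← he0, hc, ← hae', ha1]
  rfl

noncomputable def wP : G2 :=
  ⟨!![0,1;1,0], !![0,1;1,0],
    by simp [Matrix.mul_fin_two, Matrix.one_fin_two],
    by simp [Matrix.mul_fin_two, Matrix.one_fin_two]⟩

lemma w_conj (m : G2) (hm2 : m * m = 1) (c : R2)
    (h3 : (m * unip c) * (m * unip c) * (m * unip c) = 1)
    (hmU : ∀ b, m ≠ unip b) :
    c = 1 ∧ ∃ p, m = unip p * wP * unip p := by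
  obtain ⟨h11, hdet⟩ := inv_form m hm2
  set p := m.val 0 0 with hp0
  set q := m.val 0 1 with hq0
  set r := m.val 1 0 with hr0
  have hm : m.val = !![p, q; r, p] := by rw [entries_eq m, h11]
  have hr : r ≠ 0 := by
    intro h0
    apply hmU q
    have hp2 : p * p = 1 := by linear_combination hdet - q * h0
    have hp1 : p = 1 := by
      have h' : (p - 1)^2 = 0 := by linear_combination hp2 + (1 - p) * two_eq_zero
      have := pow_eq_zero_iff (n := 2) (by norm_num) |>.mp h'
      linear_combination this
    ext : 1
    rw [hm, hp1, h0]
    rfl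
  have hxval : (m * unip c).val = !![p, p*c+q; r, r*c+p] := by
    show m.val * (unip c).val = _
    rw [hm]
    show _ * !![1,c;0,1] = _
    rw [Matrix.mul_fin_two]
    refine mat2_eq ?_ ?_ ?_ ?_ <;> ring
  have hv : (m * unip c).val * (m * unip c).val * (m * unip c).val = 1 :=
    congrArg Units.val h3
  rw [hxval, Matrix.mul_fin_two, Matrix.mul_fin_two] at hv
  have hE := congrFun (congrFun hv 1) 0
  simp [Matrix.one_fin_two] at hE
  have hT : r * ((r*c - 1)^2) = 0 := by
    linear_combination hE - r * hdet - (p^2*r + r^2*c + 2*p*r^2*c) * two_eq_zero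
  have hrc : r * c = 1 := by
    rcases mul_eq_zero.mp hT with h | h
    · exact absurd h hr
    · have := pow_eq_zero_iff (n := 2) (by norm_num) |>.mp h
      linear_combination this
  have hr1 : r = 1 := unit_eq_one r (IsUnit.of_mul_eq_one (a := r) c hrc)
  have hc1 : c = 1 := by linear_combination hrc - c * hr1
  refine ⟨hc1, p, ?_⟩
  have hq : q = 1 + p*p := by linear_combination -hdet - q*hr1 + (q*r-1)*two_eq_zero
  ext : 1
  show m.val = (unip p).val * wP.val * (unip p).val
  rw [hm, hq, hr1]
  show _ = !![1,p;0,1] * !![0,1;1,0] * !![1,p;0,1]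
  rw [Matrix.mul_fin_two, Matrix.mul_fin_two]
  refine mat2_eq ?_ ?_ ?_ ?_ <;> ring

abbrev GF : Type := Matrix.GeneralLinearGroup (Fin 2) (ZMod 2)

def WF : GF :=
  ⟨!![0,1;1,0], !![0,1;1,0], by decide, by decide⟩

def SF : GF :=
  ⟨!![1,1;0,1], !![1,1;0,1], by decide, by decide⟩

lemma six_cases : ∀ M : GF, M = 1 ∨ M = SF ∨ M = WF ∨ M = WF*SF ∨ M = SF*WF ∨ M = WF*SF*WF := by
  decide

lemma emb_W : embGL2 (ZMod 2) WF = wP := by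
  refine Units.ext (Matrix.ext fun i j => ?_)
  show Matrix.GeneralLinearGroup.map _ WF i j = _
  rw [Matrix.GeneralLinearGroup.map_apply]
  fin_cases i <;> fin_cases j <;> simp [WF, wP]

lemma emb_S : embGL2 (ZMod 2) SF = unip 1 := by
  refine Units.ext (Matrix.ext fun i j => ?_)
  show Matrix.GeneralLinearGroup.map _ SF i j = _
  rw [Matrix.GeneralLinearGroup.map_apply]
  fin_cases i <;> fin_cases j <;> simp [SF, unip]

lemma wP_sq : wP * wP = 1 := by
  ext : 1
  show wP.val * wP.val = 1
  show !![0,1;1,0] * !![0,1;1,0] = 1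
  simp [Matrix.mul_fin_two, Matrix.one_fin_two]

lemma unip_inv (a : R2) : (unip a)⁻¹ = unip a :=
  inv_eq_of_mul_eq_one_left (unip_sq a)

lemma ws_cube : (wP * unip 1) * (wP * unip 1) * (wP * unip 1) = 1 := by
  have hws : (wP * unip 1).val = !![0,1;1,1] := by
    show wP.val * (unip 1).val = _
    show !![0,1;1,0] * !![1,1;0,1] = _
    rw [Matrix.mul_fin_two]
    refine mat2_eq ?_ ?_ ?_ ?_ <;> ring
  ext : 1
  rw [Units.val_mul, Units.val_mul, Units.val_one, hws,
    Matrix.mul_fin_two, Matrix.mul_fin_two, Matrix.one_fin_two]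
  refine mat2_eq ?_ ?_ ?_ ?_
  · ring
  · linear_combination two_eq_zero
  · linear_combination two_eq_zero
  · linear_combination two_eq_zero

lemma ws_ne_sw : wP * unip 1 ≠ unip 1 * wP := by
  intro h
  have hv := congrArg (fun X : G2 => X.val 0 0) h
  simp [wP, unip, Matrix.mul_apply, Fin.sum_univ_two] at hv

lemma unip_ne_one : unip (1 : R2) ≠ 1 := by
  intro h
  rw [← unip_zero] at h
  exact one_ne_zero (unip_inj h)

/-- Every automorphism `α` of `GL₂(F₂[t])` is the composite of an inner automorphism and
a Reiner automorphism: there are `g ∈ GL₂(F₂[t])`, an automorphism `τ` of `GL₂(F₂[t])`,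
and an additive automorphism `φ` of `F₂[t]` with `φ 1 = 1`, such that `τ` fixes the
embedded `GL₂(F₂)` pointwise, `τ (u a) = u (φ a)` for all `a`, and
`α X = g * τ X * g⁻¹` for all `X`. -/
theorem aut_GL2_F2t_eq_inner_mul_reiner
    (α : MulAut (Matrix.GeneralLinearGroup (Fin 2) (Polynomial (ZMod 2)))) :
    ∃ (g : Matrix.GeneralLinearGroup (Fin 2) (Polynomial (ZMod 2)))
      (τ : MulAut (Matrix.GeneralLinearGroup (Fin 2) (Polynomial (ZMod 2))))
      (φ : Polynomial (ZMod 2) ≃+ Polynomial (ZMod 2)),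
      φ 1 = 1 ∧
      (∀ M : Matrix.GeneralLinearGroup (Fin 2) (ZMod 2),
        τ (embGL2 (ZMod 2) M) = embGL2 (ZMod 2) M) ∧
      (∀ a : Polynomial (ZMod 2), τ (unip a) = unip (φ a)) ∧
      (∀ X : Matrix.GeneralLinearGroup (Fin 2) (Polynomial (ZMod 2)),
        α X = g * τ X * g⁻¹) := by
  classical
  set M := α (unip 1) with hM
  have hM2 : M * M = 1 := by rw [hM, ← map_mul, unip_sq 1, map_one]
  have hMne : M ≠ 1 := by
    intro h
    exact unip_ne_one (α.injective (by rw [← hM, h, map_one]))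
  obtain ⟨H, d, hd, hMH⟩ := conj_unip M hM2 hMne
  have hα' : ∀ X, (MulAut.conj H⁻¹) X = H⁻¹ * X * H := by
    intro X; simp [MulAut.conj_apply]
  have h1 : H⁻¹ * M * H = unip d := by
    rw [mul_assoc, hMH, ← mul_assoc, inv_mul_cancel, one_mul]
  have hU : ∀ a, ∃ b, H⁻¹ * α (unip a) * H = unip b := by
    intro a
    apply centralizer_unip d hd
    have hcomm : unip a * unip 1 = unip 1 * unip a := by
      rw [unip_mul, unip_mul, add_comm]
    calc H⁻¹ * α (unip a) * H * unip d
        = H⁻¹ * α (unip a) * H * (H⁻¹ * M * H) := by rw [h1]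
      _ = H⁻¹ * (α (unip a) * α (unip 1)) * H := by rw [hM]; group
      _ = H⁻¹ * (α (unip 1) * α (unip a)) * H := by
            rw [← map_mul, ← map_mul, hcomm]
      _ = (H⁻¹ * M * H) * (H⁻¹ * α (unip a) * H) := by rw [hM]; group
      _ = unip d * (H⁻¹ * α (unip a) * H) := by rw [h1]
  set m := H⁻¹ * α wP * H with hmdef
  have hm2 : m * m = 1 := by
    have : α wP * α wP = 1 := by rw [← map_mul, wP_sq, map_one]
    calc m * m = H⁻¹ * (α wP * α wP) * H := by rw [hmdef]; group
      _ = 1 := by rw [this]; group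
  have hmU : ∀ b, m ≠ unip b := by
    intro b hb
    apply ws_ne_sw
    apply α.injective
    have e1 : α (wP * unip 1) = H * (unip b * unip d) * H⁻¹ := by
      rw [map_mul, ← hM]
      have hw : α wP = H * unip b * H⁻¹ := by
        rw [← hb, hmdef]; group
      have hMd : M = H * unip d * H⁻¹ := by rw [← h1]; group
      rw [hw, hMd]; group
    have e2 : α (unip 1 * wP) = H * (unip d * unip b) * H⁻¹ := by
      rw [map_mul, ← hM]
      have hw : α wP = H * unip b * H⁻¹ := by
        rw [← hb, hmdef]; group
      have hMd : M = H * unip d * H⁻¹ := by rw [← h1]; group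
      rw [hw, hMd]; group
    rw [e1, e2, unip_mul, unip_mul, add_comm]
  have h3 : (m * unip d) * (m * unip d) * (m * unip d) = 1 := by
    have hmd : m * unip d = H⁻¹ * α (wP * unip 1) * H := by
      rw [map_mul, ← hM, hmdef, ← h1]; group
    calc (m * unip d) * (m * unip d) * (m * unip d)
        = H⁻¹ * (α (wP * unip 1) * α (wP * unip 1) * α (wP * unip 1)) * H := by
          rw [hmd]; group
      _ = 1 := by rw [← map_mul, ← map_mul, ws_cube, map_one]; group
  obtain ⟨hd1, p, hmp⟩ := w_conj m hm2 d h3 hmU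
  set g := H * unip p with hg
  set τ : MulAut G2 := α.trans (MulAut.conj g⁻¹) with hτdef
  have hτ : ∀ X, τ X = g⁻¹ * α X * g := by
    intro X
    simp [hτdef, MulAut.conj_apply]
  have hτU : ∀ a, ∃ b, τ (unip a) = unip b := by
    intro a
    obtain ⟨b, hb⟩ := hU a
    refine ⟨b, ?_⟩
    rw [hτ, hg, mul_inv_rev, unip_inv]
    calc unip p * H⁻¹ * α (unip a) * (H * unip p)
        = unip p * (H⁻¹ * α (unip a) * H) * unip p := by group
      _ = unip p * unip b * unip p := by rw [hb]
      _ = unip b := by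
          rw [unip_mul, unip_mul]
          congr 1
          linear_combination p * two_eq_zero
  have hτu1 : τ (unip 1) = unip 1 := by
    rw [hτ, ← hM, hg, mul_inv_rev, unip_inv]
    calc unip p * H⁻¹ * M * (H * unip p)
        = unip p * (H⁻¹ * M * H) * unip p := by group
      _ = unip p * unip d * unip p := by rw [h1]
      _ = unip d := by
          rw [unip_mul, unip_mul]
          congr 1
          linear_combination p * two_eq_zero
      _ = unip 1 := by rw [hd1]
  have hτw : τ wP = wP := by
    rw [hτ, hg, mul_inv_rev, unip_inv]
    have : α wP = H * m * H⁻¹ := by rw [hmdef]; group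
    rw [this, hmp]
    calc unip p * H⁻¹ * (H * (unip p * wP * unip p) * H⁻¹) * (H * unip p)
        = (unip p * unip p) * wP * (unip p * unip p) := by group
      _ = wP := by rw [unip_sq]; group
  -- the additive map
  set f : R2 → R2 := fun a => (τ (unip a)).val 0 1 with hfdef
  have hf : ∀ a, τ (unip a) = unip (f a) := by
    intro a
    obtain ⟨b, hb⟩ := hτU a
    have hfa : f a = b := by
      simp only [hfdef]
      rw [hb]
      simp [unip]
    rw [hb, hfa]
  have hτU' : ∀ a, ∃ b, τ.symm (unip a) = unip b := by
    intro a
    apply centralizer_unip 1 one_ne_zero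
    apply τ.injective
    rw [map_mul, map_mul, MulEquiv.apply_symm_apply, hτu1]
    rw [unip_mul, unip_mul, add_comm]
  set f' : R2 → R2 := fun a => (τ.symm (unip a)).val 0 1 with hf'def
  have hf' : ∀ a, τ.symm (unip a) = unip (f' a) := by
    intro a
    obtain ⟨b, hb⟩ := hτU' a
    have hfa : f' a = b := by
      simp only [hf'def]
      rw [hb]
      simp [unip]
    rw [hb, hfa]
  have hleft : ∀ a, f' (f a) = a := by
    intro a
    apply unip_inj
    rw [← hf' (f a), ← hf a, MulEquiv.symm_apply_apply]
  have hright : ∀ a, f (f' a) = a := by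
    intro a
    apply unip_inj
    rw [← hf (f' a), ← hf' a, MulEquiv.apply_symm_apply]
  have hadd : ∀ a b, f (a + b) = f a + f b := by
    intro a b
    apply unip_inj
    calc unip (f (a+b)) = τ (unip (a+b)) := (hf _).symm
      _ = τ (unip a) * τ (unip b) := by rw [← unip_mul, map_mul]
      _ = unip (f a) * unip (f b) := by rw [hf a, hf b]
      _ = unip (f a + f b) := unip_mul _ _
  have hf1 : f 1 = 1 := by
    apply unip_inj
    rw [← hf 1, hτu1]
  refine ⟨g, τ, AddEquiv.mk ⟨f, f', hleft, hright⟩ hadd, hf1, ?_, ?_, ?_⟩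
  · intro M0
    have hτS : τ (embGL2 (ZMod 2) SF) = embGL2 (ZMod 2) SF := by
      rw [emb_S, hτu1]
    have hτW : τ (embGL2 (ZMod 2) WF) = embGL2 (ZMod 2) WF := by
      rw [emb_W, hτw]
    rcases six_cases M0 with h|h|h|h|h|h <;> rw [h] <;>
      simp only [map_mul, map_one, hτS, hτW]
  · intro a
    exact hf a
  · intro X
    rw [hτ]
    group
end

section
/- Let H be a group, (G i)_{i ∈ ι} a family of groups, and φ i : H →* G i homomorphisms such that for every i the image of φ i is contained in the center of G i. Let P = Monoid.PushoutI φ be the amalgamated free product, with canonical maps of : G k →* P. Then for any two distinct indices i ≠ j and any element g ∈ G i, there exists a group automorphism ψ of P (a 'partial conjugation') such that ψ(of(x)) = of(g)·of(x)·of(g)⁻¹ for every x ∈ G j, and ψ(of(x)) = of(x) for every index k ≠ j and every x ∈ G k. -/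
open scoped Classical

private noncomputable def pcHom {ι : Type*} {H : Type*} [Group H] {G : ι → Type*} [∀ i, Group (G i)]
    (φ : ∀ i, H →* G i)
    (hcentral : ∀ i, (φ i).range ≤ Subgroup.center (G i))
    (i j : ι) (g : G i) : Monoid.PushoutI φ →* Monoid.PushoutI φ :=
  Monoid.PushoutI.lift
    (fun k => if k = j then (MulAut.conj (Monoid.PushoutI.of (φ := φ) i g)).toMonoidHom.comp
        (Monoid.PushoutI.of (φ := φ) k) else Monoid.PushoutI.of (φ := φ) k)
    (Monoid.PushoutI.base φ)
    (by
      intro k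
      by_cases hk : k = j
      · subst hk
        simp only [if_pos]
        ext h
        simp only [MonoidHom.comp_apply, MulAut.conj_apply, MulEquiv.coe_toMonoidHom]
        rw [Monoid.PushoutI.of_apply_eq_base φ k h, ← Monoid.PushoutI.of_apply_eq_base φ i h,
          ← map_mul, ← map_inv, ← map_mul]
        congr 1
        have hc := Subgroup.mem_center_iff.mp (hcentral i ⟨h, rfl⟩)
        rw [hc g, mul_assoc, mul_inv_cancel, mul_one]
      · simp only [if_neg hk]
        exact Monoid.PushoutI.of_comp_eq_base k)

private theorem pcHom_of_ne {ι : Type*} {H : Type*} [Group H] {G : ι → Type*} [∀ i, Group (G i)]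
    (φ : ∀ i, H →* G i) (hcentral : ∀ i, (φ i).range ≤ Subgroup.center (G i))
    (i j : ι) (g : G i) (k : ι) (hk : k ≠ j) (x : G k) :
    pcHom φ hcentral i j g (Monoid.PushoutI.of (φ := φ) k x) =
      Monoid.PushoutI.of (φ := φ) k x := by
  simp [pcHom, Monoid.PushoutI.lift_of, if_neg hk]

private theorem pcHom_of_eq {ι : Type*} {H : Type*} [Group H] {G : ι → Type*} [∀ i, Group (G i)]
    (φ : ∀ i, H →* G i) (hcentral : ∀ i, (φ i).range ≤ Subgroup.center (G i))
    (i j : ι) (g : G i) (x : G j) :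
    pcHom φ hcentral i j g (Monoid.PushoutI.of (φ := φ) j x) =
      Monoid.PushoutI.of (φ := φ) i g * Monoid.PushoutI.of (φ := φ) j x *
        (Monoid.PushoutI.of (φ := φ) i g)⁻¹ := by
  simp [pcHom, Monoid.PushoutI.lift_of]

private theorem pcHom_base {ι : Type*} {H : Type*} [Group H] {G : ι → Type*} [∀ i, Group (G i)]
    (φ : ∀ i, H →* G i) (hcentral : ∀ i, (φ i).range ≤ Subgroup.center (G i))
    (i j : ι) (g : G i) (h : H) :
    pcHom φ hcentral i j g (Monoid.PushoutI.base φ h) = Monoid.PushoutI.base φ h := by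
  simp [pcHom, Monoid.PushoutI.lift_base]

private theorem pcHom_comp {ι : Type*} {H : Type*} [Group H] {G : ι → Type*} [∀ i, Group (G i)]
    (φ : ∀ i, H →* G i) (hcentral : ∀ i, (φ i).range ≤ Subgroup.center (G i))
    (i j : ι) (hij : i ≠ j) (g g' : G i) :
    (pcHom φ hcentral i j g).comp (pcHom φ hcentral i j g') =
      pcHom φ hcentral i j (g' * g) := by
  apply Monoid.PushoutI.hom_ext
  · intro k
    ext x
    by_cases hk : k = j
    · subst hk
      simp only [MonoidHom.comp_apply, pcHom_of_eq]
      rw [map_mul, map_mul, map_inv, pcHom_of_ne _ _ _ _ _ _ hij, pcHom_of_eq]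
      simp [map_mul, mul_inv_rev, mul_assoc]
    · simp [MonoidHom.comp_apply, pcHom_of_ne _ _ _ _ _ _ hk]
  · ext h
    simp [MonoidHom.comp_apply, pcHom_base]

/-- Partial conjugations of an amalgamated free product along a central subgroup:
if each `φ i` has image in the centre of `G i`, then for distinct indices `i ≠ j` and
`g ∈ G i`, there is an automorphism of the pushout conjugating the image of `G j`
by `of g` and fixing the images of all other factors pointwise. -/
theorem partial_conjugation_of_amalgamated_product
    {ι : Type*} {H : Type*} [Group H] {G : ι → Type*} [∀ i, Group (G i)]
    (φ : ∀ i, H →* G i)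
    (hcentral : ∀ i, (φ i).range ≤ Subgroup.center (G i))
    {i j : ι} (hij : i ≠ j) (g : G i) :
    ∃ ψ : Monoid.PushoutI φ ≃* Monoid.PushoutI φ,
      (∀ x : G j, ψ (Monoid.PushoutI.of (φ := φ) j x) =
          Monoid.PushoutI.of (φ := φ) i g * Monoid.PushoutI.of (φ := φ) j x *
            (Monoid.PushoutI.of (φ := φ) i g)⁻¹) ∧
      (∀ k : ι, k ≠ j → ∀ x : G k,
          ψ (Monoid.PushoutI.of (φ := φ) k x) = Monoid.PushoutI.of (φ := φ) k x) := by
  have hone : pcHom φ hcentral i j 1 = MonoidHom.id _ := by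
    apply Monoid.PushoutI.hom_ext
    · intro k
      ext x
      by_cases hk : k = j
      · subst hk; simp [pcHom_of_eq]
      · simp [pcHom_of_ne _ _ _ _ _ _ hk]
    · ext h; simp [pcHom_base]
  refine ⟨{ toFun := pcHom φ hcentral i j g
            invFun := pcHom φ hcentral i j g⁻¹
            left_inv := fun x => by
              rw [← MonoidHom.comp_apply, pcHom_comp _ _ _ _ hij, mul_inv_cancel, hone]; rfl
            right_inv := fun x => by
              rw [← MonoidHom.comp_apply, pcHom_comp _ _ _ _ hij, inv_mul_cancel, hone]; rfl
            map_mul' := map_mul _ },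
    fun x => pcHom_of_eq φ hcentral i j g x,
    fun k hk x => pcHom_of_ne φ hcentral i j g k hk x⟩
end

section
/- Let F and E be finite fields with E an F-algebra, |F| = q and |E| = q². Then the number of group automorphisms σ of the multiplicative group Eˣ such that σ(u) = u for every u ∈ Eˣ lying in the image of Fˣ under the algebra map equals 2·φ(q+1) if q is odd, and φ(q+1) if q is even, where φ denotes Euler's totient function (Nat.totient). -/
open Multiplicative

private lemma coprime_succ (m : ℕ) : Nat.Coprime m (m + 1) := by
  simp [show m + 1 = 1 + m by omega]

private lemma totient_double_even (m : ℕ) :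
    Nat.totient (2 * (2 * m)) = 2 * Nat.totient (2 * m) :=
  Nat.totient_mul_of_prime_of_dvd Nat.prime_two ⟨m, rfl⟩

private lemma totient_odd_mul (m : ℕ) (hm : Odd m) :
    Nat.totient (2 * m) = Nat.totient m := by
  rw [Nat.totient_mul (Nat.coprime_two_left.2 hm), Nat.totient_two, one_mul]

private lemma totient_aux_odd {q : ℕ} (hq : Odd q) :
    Nat.totient ((q - 1) * (q + 1)) = Nat.totient (q - 1) * (2 * Nat.totient (q + 1)) := by
  obtain ⟨m, rfl⟩ := hq
  have h1 : 2 * m + 1 - 1 = 2 * m := by omega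
  have h2 : 2 * m + 1 + 1 = 2 * (m + 1) := by omega
  rw [h1, h2]
  rcases Nat.even_or_odd m with hm | hm
  · have e : 2 * m * (2 * (m + 1)) = (2 * (2 * m)) * (m + 1) := by ring
    have hodd : Odd (m + 1) := Even.add_one hm
    have hco : Nat.Coprime (2 * (2 * m)) (m + 1) := by
      have c2 : Nat.Coprime (m + 1) 2 := Nat.coprime_two_right.2 hodd
      have cm : Nat.Coprime (m + 1) m := (coprime_succ m).symm
      have := (c2.mul_right (c2.mul_right cm)).symm
      simpa [mul_assoc] using this
    rw [e, Nat.totient_mul hco, totient_double_even, totient_odd_mul (m + 1) hodd]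
    ring
  · have e : 2 * m * (2 * (m + 1)) = m * (2 * (2 * (m + 1))) := by ring
    have hco : Nat.Coprime m (2 * (2 * (m + 1))) := by
      have c2 : Nat.Coprime m 2 := Nat.coprime_two_right.2 hm
      exact c2.mul_right (c2.mul_right (coprime_succ m))
    rw [e, Nat.totient_mul hco, totient_double_even, totient_odd_mul m hm]

private lemma coprime_of_even {q : ℕ} (hq : ¬ Odd q) (h2 : 2 ≤ q) :
    Nat.Coprime (q - 1) (q + 1) := by
  rw [Nat.not_odd_iff_even] at hq
  have hd2 : Nat.gcd (q - 1) (q + 1) ∣ 2 := by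
    have := Nat.dvd_sub (Nat.gcd_dvd_right (q - 1) (q + 1)) (Nat.gcd_dvd_left (q - 1) (q + 1))
    simpa [show q + 1 - (q - 1) = 2 by omega] using this
  have hodd : ¬ (2 ∣ q - 1) := by
    obtain ⟨r, rfl⟩ := hq
    omega
  rcases (Nat.dvd_prime Nat.prime_two).1 hd2 with h | h
  · exact h
  · exact absurd (h ▸ Nat.gcd_dvd_left (q - 1) (q + 1)) hodd

private lemma zmod_fix_iff {q n : ℕ} (h2 : 2 ≤ q) (hn : n = (q - 1) * (q + 1)) (x : ZMod n) :
    (∀ a : ZMod n, ((q - 1 : ℕ) : ZMod n) * a = 0 → x * a = a)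
      ↔ (q - 1) ∣ (x - 1).val := by
  subst hn
  have hnz : NeZero ((q - 1) * (q + 1)) := ⟨Nat.mul_ne_zero (by omega) (by omega)⟩
  have hval : ((x - 1).val : ZMod ((q - 1) * (q + 1))) = x - 1 := by
    rw [ZMod.natCast_val, ZMod.cast_id]
  constructor
  · intro h
    have h0 : ((q - 1 : ℕ) : ZMod ((q - 1) * (q + 1))) * ((q + 1 : ℕ) : _) = 0 := by
      rw [← Nat.cast_mul, ZMod.natCast_self]
    have h1 := h _ h0
    have key : (((x - 1).val * (q + 1) : ℕ) : ZMod ((q - 1) * (q + 1))) = 0 := by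
      rw [Nat.cast_mul, hval]
      linear_combination h1
    have hd := (ZMod.natCast_eq_zero_iff _ _).1 key
    exact (Nat.mul_dvd_mul_iff_right (show 0 < q + 1 by omega)).1 hd
  · rintro ⟨c, hc⟩ a ha
    have hx : x = ((x - 1).val : ZMod ((q - 1) * (q + 1))) + 1 := by rw [hval]; ring
    rw [hx, hc, Nat.cast_mul]
    linear_combination (c : ZMod ((q - 1) * (q + 1))) * ha

private lemma image_iff {F E : Type*} [Field F] [Field E] [Fintype F] [Fintype E] [Algebra F E]
    {q : ℕ} (hF : Fintype.card F = q) (u : Eˣ) :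
    (∃ v : Fˣ, Units.map (algebraMap F E).toMonoidHom v = u) ↔ u ^ (q - 1) = 1 := by
  classical
  set f := Units.map (algebraMap F E).toMonoidHom with hf
  have hinj : Function.Injective f := Units.map_injective (algebraMap F E).injective
  have hcardF : Fintype.card Fˣ = q - 1 := by rw [Fintype.card_units, hF]
  have hST : f.range ≤ (powMonoidHom (q - 1) : Eˣ →* Eˣ).ker := by
    rintro _ ⟨v, rfl⟩
    rw [MonoidHom.mem_ker, powMonoidHom_apply, ← map_pow, ← hcardF, pow_card_eq_one, map_one]
  have hcardS : Nat.card f.range = q - 1 := by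
    rw [Nat.card_congr (MonoidHom.ofInjective hinj).toEquiv.symm, Nat.card_eq_fintype_card,
      hcardF]
  have hcardT : Nat.card (powMonoidHom (q - 1) : Eˣ →* Eˣ).ker ≤ q - 1 := by
    have hq2 : 2 ≤ q := by rw [← hF]; exact Fintype.one_lt_card
    calc Nat.card (powMonoidHom (q - 1) : Eˣ →* Eˣ).ker
        = Fintype.card {x : Eˣ // x ^ (q - 1) = 1} := by
          rw [Nat.card_eq_fintype_card]
          exact Fintype.card_congr (Equiv.subtypeEquivRight fun x => by
            simp [MonoidHom.mem_ker, powMonoidHom_apply])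
      _ = (Finset.univ.filter (fun a : Eˣ => a ^ (q - 1) = 1)).card := Fintype.card_subtype _
      _ ≤ q - 1 := IsCyclic.card_pow_eq_one_le (by omega)
  have hSeqT : f.range = (powMonoidHom (q - 1) : Eˣ →* Eˣ).ker :=
    Subgroup.eq_of_le_of_card_ge hST (hcardT.trans hcardS.ge)
  constructor
  · rintro ⟨v, rfl⟩
    have : f v ∈ f.range := ⟨v, rfl⟩
    rw [hSeqT, MonoidHom.mem_ker, powMonoidHom_apply] at this
    exact this
  · intro h
    have : u ∈ (powMonoidHom (q - 1) : Eˣ →* Eˣ).ker := by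
      rw [MonoidHom.mem_ker, powMonoidHom_apply]; exact h
    rw [← hSeqT] at this
    exact this

/-- If `F ⊆ E` are finite fields with `|F| = q` and `|E| = q²`, then the number of
group automorphisms of `Eˣ` fixing the image of `Fˣ` pointwise is `2·φ(q+1)` if `q` is
odd and `φ(q+1)` if `q` is even. -/
theorem card_aut_units_fixing_subfield
    {F E : Type*} [Field F] [Field E] [Fintype F] [Fintype E] [Algebra F E]
    (q : ℕ) (hF : Fintype.card F = q) (hE : Fintype.card E = q ^ 2) :
    Nat.card {σ : MulAut Eˣ //
        ∀ u : Eˣ, (∃ v : Fˣ, Units.map (algebraMap F E).toMonoidHom v = u) → σ u = u} =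
      if Odd q then 2 * Nat.totient (q + 1) else Nat.totient (q + 1) := by
  classical
  have hq2 : 2 ≤ q := by rw [← hF]; exact Fintype.one_lt_card
  have hsq : (q - 1) * (q + 1) + 1 = q ^ 2 := by
    obtain ⟨r, rfl⟩ : ∃ r, q = r + 1 := ⟨q - 1, by omega⟩
    simp only [Nat.add_sub_cancel]
    ring
  have hn : Nat.card Eˣ = (q - 1) * (q + 1) := by
    rw [Nat.card_eq_fintype_card, Fintype.card_units, hE]
    omega
  set n := Nat.card Eˣ with hnn
  have hnz : NeZero n := ⟨by rw [hn]; exact Nat.mul_ne_zero (by omega) (by omega)⟩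
  have hq1nz : NeZero (q - 1) := ⟨by omega⟩
  -- the equivalence with units of `ZMod n`
  let e : Multiplicative (ZMod n) ≃* Eˣ := zmodCyclicMulEquiv inferInstance
  let Φ : MulAut Eˣ ≃ (ZMod n)ˣ :=
    (MulAut.congr e).toEquiv.symm.trans
      (MulEquiv.toAdditive.trans (ZMod.AddAutEquivUnits n).toEquiv)
  have hcoe : ∀ σ : MulAut Eˣ, ((Φ σ : (ZMod n)ˣ) : ZMod n)
      = toAdd (e.symm (σ (e (ofAdd 1)))) := fun σ => rfl
  have hgen : ∀ b : ZMod n, e (ofAdd b) = (e (ofAdd 1)) ^ b.val := by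
    intro b
    rw [← map_pow, ← ofAdd_nsmul, nsmul_eq_mul, mul_one, ZMod.natCast_val, ZMod.cast_id]
  have key : ∀ (σ : MulAut Eˣ) (a : ZMod n),
      σ (e (ofAdd a)) = e (ofAdd (((Φ σ : (ZMod n)ˣ) : ZMod n) * a)) := by
    intro σ a
    set k := ((Φ σ : (ZMod n)ˣ) : ZMod n) with hk
    have h1 : σ (e (ofAdd 1)) = e (ofAdd k) := by
      rw [hk, hcoe, ofAdd_toAdd, MulEquiv.apply_symm_apply]
    rw [hgen a, map_pow, h1, ← map_pow, ← ofAdd_nsmul, nsmul_eq_mul,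
      ZMod.natCast_val, ZMod.cast_id, mul_comm]
  -- the condition in terms of `ZMod n`
  have main_iff : ∀ σ : MulAut Eˣ,
      (∀ u : Eˣ, (∃ v : Fˣ, Units.map (algebraMap F E).toMonoidHom v = u) → σ u = u) ↔
        (q - 1) ∣ (((Φ σ : (ZMod n)ˣ) : ZMod n) - 1).val := by
    intro σ
    rw [← zmod_fix_iff hq2 hn]
    constructor
    · intro h a ha
      have hpow : (e (ofAdd a)) ^ (q - 1) = 1 := by
        rw [← map_pow, ← ofAdd_nsmul, nsmul_eq_mul, ha, ofAdd_zero, map_one]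
      have := h (e (ofAdd a)) ((image_iff hF _).2 hpow)
      rw [key σ a] at this
      have := e.injective this
      simpa using this
    · intro h u hu
      have hpow : u ^ (q - 1) = 1 := (image_iff hF u).1 hu
      obtain ⟨a, rfl⟩ : ∃ a : ZMod n, e (ofAdd a) = u :=
        ⟨toAdd (e.symm u), by simp⟩
      have ha : ((q - 1 : ℕ) : ZMod n) * a = 0 := by
        rw [← map_pow, ← ofAdd_nsmul, nsmul_eq_mul] at hpow
        have := e.injective (hpow.trans (map_one e).symm)
        simpa using this
      rw [key σ a, h a ha]
  -- transfer the cardinality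
  rw [Nat.card_congr (Equiv.subtypeEquiv (q := fun k : (ZMod n)ˣ => (q - 1) ∣ (((k : (ZMod n)ˣ) : ZMod n) - 1).val) Φ main_iff)]
  -- counting via the kernel of `unitsMap`
  have hdvd : (q - 1) ∣ n := hn ▸ ⟨q + 1, rfl⟩
  set ψ := ZMod.unitsMap hdvd with hψ
  have hker : ∀ k : (ZMod n)ˣ,
      (q - 1) ∣ (((k : (ZMod n)ˣ) : ZMod n) - 1).val ↔ k ∈ ψ.ker := by
    intro k
    have hcast : (ψ k : ZMod (q - 1)) = ZMod.castHom hdvd (ZMod (q - 1)) (k : ZMod n) := by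
      rw [hψ, ZMod.unitsMap_def, Units.coe_map, MonoidHom.coe_coe]
    have hc : ZMod.castHom hdvd (ZMod (q - 1)) (((k : (ZMod n)ˣ) : ZMod n) - 1)
        = ((((k : (ZMod n)ˣ) : ZMod n) - 1).val : ZMod (q - 1)) := by
      rw [ZMod.castHom_apply, ← ZMod.natCast_val]
    rw [MonoidHom.mem_ker, Units.ext_iff, hcast, Units.val_one]
    calc (q - 1) ∣ (((k : (ZMod n)ˣ) : ZMod n) - 1).val
        ↔ (((((k : (ZMod n)ˣ) : ZMod n) - 1).val : ℕ) : ZMod (q - 1)) = 0 :=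
          (ZMod.natCast_eq_zero_iff _ _).symm
      _ ↔ ZMod.castHom hdvd (ZMod (q - 1)) (((k : (ZMod n)ˣ) : ZMod n) - 1) = 0 := by rw [hc]
      _ ↔ ZMod.castHom hdvd (ZMod (q - 1)) ((k : (ZMod n)ˣ) : ZMod n) = 1 := by
          rw [map_sub, map_one, sub_eq_zero]
  have hcount : Nat.card {k : (ZMod n)ˣ //
      (q - 1) ∣ (((k : (ZMod n)ˣ) : ZMod n) - 1).val} = Nat.card ψ.ker :=
    Nat.card_congr (Equiv.subtypeEquivRight fun k => hker k)
  rw [hcount]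
  have htot : Nat.totient n = Nat.totient (q - 1) * Nat.card ψ.ker := by
    have h1 : Nat.card (ZMod n)ˣ = Nat.totient n := by
      rw [Nat.card_eq_fintype_card, ZMod.card_units_eq_totient]
    have h2 : Nat.card (ZMod (q - 1))ˣ = Nat.totient (q - 1) := by
      rw [Nat.card_eq_fintype_card, ZMod.card_units_eq_totient]
    rw [← h1, ← h2, Subgroup.card_eq_card_quotient_mul_card_subgroup ψ.ker]
    congr 1
    exact Nat.card_congr
      (QuotientGroup.quotientKerEquivOfSurjective ψ (ZMod.unitsMap_surjective hdvd)).toEquiv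
  have hpos : 0 < Nat.totient (q - 1) := Nat.totient_pos.2 (by omega)
  by_cases hodd : Odd q
  · rw [if_pos hodd]
    have this : Nat.totient ((q - 1) * (q + 1)) = Nat.totient (q - 1) * Nat.card ψ.ker :=
      (congrArg Nat.totient hn).symm.trans htot
    rw [totient_aux_odd hodd] at this
    exact Nat.eq_of_mul_eq_mul_left hpos this.symm
  · rw [if_neg hodd]
    have this : Nat.totient ((q - 1) * (q + 1)) = Nat.totient (q - 1) * Nat.card ψ.ker :=
      (congrArg Nat.totient hn).symm.trans htot
    rw [Nat.totient_mul (coprime_of_even hodd hq2)] at this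
    exact Nat.eq_of_mul_eq_mul_left hpos this.symm
end

section
/- Let q ≥ 2 be a natural number. The number of units u of ZMod(q²−1) whose image under the natural ring homomorphism ZMod(q²−1) → ZMod(q−1) (which exists since (q−1) divides (q²−1)) equals 1 is 2·φ(q+1) if q is odd, and φ(q+1) if q is even, where φ denotes Euler's totient function (Nat.totient). -/
/-- For `q ≥ 2`, the number of units of `ZMod (q²−1)` mapping to `1` under the natural
ring homomorphism `ZMod (q²−1) → ZMod (q−1)` is `2·φ(q+1)` if `q` is odd and `φ(q+1)`
if `q` is even. -/
theorem card_units_castHom_eq_one (q : ℕ) (hq : 2 ≤ q) :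
    Nat.card {u : (ZMod (q ^ 2 - 1))ˣ //
        ZMod.castHom (show (q - 1) ∣ (q ^ 2 - 1) from
          ⟨q + 1, by rw [← one_pow 2, Nat.sq_sub_sq]; exact Nat.mul_comm _ _⟩) (ZMod (q - 1))
          (u : ZMod (q ^ 2 - 1)) = 1} =
      if Odd q then 2 * Nat.totient (q + 1) else Nat.totient (q + 1) := by
  have hd : (q - 1) ∣ (q ^ 2 - 1) :=
    ⟨q + 1, by rw [← one_pow 2, Nat.sq_sub_sq]; exact Nat.mul_comm _ _⟩
  have hn : q ^ 2 - 1 ≠ 0 := by nlinarith [Nat.sub_add_cancel (show 1 ≤ q ^ 2 by nlinarith)]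
  have hm : q - 1 ≠ 0 := by omega
  haveI : NeZero (q ^ 2 - 1) := ⟨hn⟩
  haveI : NeZero (q - 1) := ⟨hm⟩
  set f : (ZMod (q ^ 2 - 1))ˣ →* (ZMod (q - 1))ˣ := ZMod.unitsMap hd with hf
  -- identify the subtype with the kernel of f
  have hset : Nat.card {u : (ZMod (q ^ 2 - 1))ˣ //
        ZMod.castHom hd (ZMod (q - 1)) (u : ZMod (q ^ 2 - 1)) = 1} = Nat.card f.ker := by
    apply Nat.card_congr
    apply Equiv.subtypeEquivRight
    intro u
    rw [MonoidHom.mem_ker, hf, ZMod.unitsMap_def, Units.ext_iff]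
    simp
  rw [hset]
  have hker : Nat.card f.ker * Nat.totient (q - 1) = Nat.totient (q ^ 2 - 1) := by
    have h1 : f.ker.index = Nat.card (ZMod (q - 1))ˣ := by
      rw [Subgroup.index_ker, MonoidHom.range_eq_top.mpr (ZMod.unitsMap_surjective hd),
        Subgroup.card_top]
    have h2 := f.ker.card_mul_index
    rw [h1] at h2
    have e1 : Nat.card (ZMod (q - 1))ˣ = Nat.totient (q - 1) := by
      rw [Nat.card_eq_fintype_card, ZMod.card_units_eq_totient]
    have e2 : Nat.card (ZMod (q ^ 2 - 1))ˣ = Nat.totient (q ^ 2 - 1) := by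
      rw [Nat.card_eq_fintype_card, ZMod.card_units_eq_totient]
    rw [e1, e2] at h2
    exact h2
  have hgcd : Nat.gcd (q - 1) (q + 1) = if Odd q then 2 else 1 := by
    have h2 : q + 1 = 2 + (q - 1) := by omega
    rw [h2, Nat.gcd_add_self_right]
    rcases Nat.even_or_odd q with he | ho
    · rw [if_neg (by simpa using he)]
      obtain ⟨k, hk⟩ := he
      exact Nat.coprime_two_right.mpr ⟨k - 1, by omega⟩
    · rw [if_pos ho]
      obtain ⟨k, hk⟩ := ho
      exact Nat.gcd_eq_right (by omega)
  have heq : q ^ 2 - 1 = (q - 1) * (q + 1) := by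
    rw [← one_pow 2, Nat.sq_sub_sq]; exact Nat.mul_comm _ _
  have htot := Nat.totient_gcd_mul_totient_mul (q - 1) (q + 1)
  rw [hgcd] at htot
  have hphig : Nat.totient (if Odd q then 2 else 1) = 1 := by
    split <;> simp [Nat.totient_two]
  rw [hphig, one_mul, ← heq] at htot
  have hpos : 0 < Nat.totient (q - 1) := Nat.totient_pos.mpr (by omega)
  apply Nat.eq_of_mul_eq_mul_right hpos
  rw [hker, htot]
  split <;> ring
end

section
/- For every finite field F, the group GL₂(F[t]) is generated by the image of GL₂(F) (matrices with constant entries, embedded via the constant-polynomial ring homomorphism) together with the unipotent elements u(a) = [[1,a],[0,1]] for a ∈ F[t]; i.e. the subgroup closure of the union of these two sets is all of GL₂(F[t]). -/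
lemma map_fin_two {R S : Type*} (f : R → S) (a b c d : R) :
    (!![a, b; c, d]).map f = !![f a, f b; f c, f d] := by
  ext i j; fin_cases i <;> fin_cases j <;> simp

noncomputable def diagGL2 {F : Type*} [Field F] (a d : F) (ha : a ≠ 0) (hd : d ≠ 0) :
    Matrix.GeneralLinearGroup (Fin 2) F :=
  ⟨!![a, 0; 0, d], !![a⁻¹, 0; 0, d⁻¹],
    by simp [Matrix.mul_fin_two, Matrix.one_fin_two, mul_inv_cancel₀ ha, mul_inv_cancel₀ hd],
    by simp [Matrix.mul_fin_two, Matrix.one_fin_two, inv_mul_cancel₀ ha, inv_mul_cancel₀ hd]⟩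

noncomputable def wGL2 (F : Type*) [Field F] : Matrix.GeneralLinearGroup (Fin 2) F :=
  ⟨!![0, 1; -1, 0], !![0, -1; 1, 0],
    by simp [Matrix.mul_fin_two, Matrix.one_fin_two],
    by simp [Matrix.mul_fin_two, Matrix.one_fin_two]⟩

/-- For every finite field `F`, the group `GL₂(F[t])` is generated by the image of
`GL₂(F)` together with the unipotent elements `u(a)`, `a ∈ F[t]`. -/
theorem GL2_polynomial_generated_by_constants_and_unipotents
    (F : Type) [Field F] [Fintype F] :
    Subgroup.closure (Set.range (embGL2 F) ∪ Set.range (unip : Polynomial F →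
      Matrix.GeneralLinearGroup (Fin 2) (Polynomial F))) = ⊤ := by
  set H := Subgroup.closure (Set.range (embGL2 F) ∪ Set.range (unip : Polynomial F →
      Matrix.GeneralLinearGroup (Fin 2) (Polynomial F))) with hH
  have hu : ∀ a : Polynomial F, unip a ∈ H := fun a =>
    Subgroup.subset_closure (Or.inr ⟨a, rfl⟩)
  have he : ∀ g, embGL2 F g ∈ H := fun g => Subgroup.subset_closure (Or.inl ⟨g, rfl⟩)
  -- base case: lower-left entry zero
  have base : ∀ M : Matrix.GeneralLinearGroup (Fin 2) (Polynomial F),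
      M.1 1 0 = 0 → M ∈ H := by
    intro M hM
    have hdet : IsUnit (M.1.det) := by
      rw [← Matrix.isUnit_iff_isUnit_det]
      exact M.isUnit
    rw [Matrix.det_fin_two, hM, mul_zero, sub_zero] at hdet
    have h00 : IsUnit (M.1 0 0) := isUnit_of_mul_isUnit_left hdet
    have h11 : IsUnit (M.1 1 1) := isUnit_of_mul_isUnit_right hdet
    rw [Polynomial.isUnit_iff] at h00 h11
    obtain ⟨a, ha, hCa⟩ := h00
    obtain ⟨d, hd, hCd⟩ := h11
    rw [isUnit_iff_ne_zero] at ha hd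
    have key : M = embGL2 F (diagGL2 a d ha hd) * unip (Polynomial.C a⁻¹ * M.1 0 1) := by
      apply Units.ext
      show M.1 = _
      rw [Matrix.eta_fin_two M.1, hM, ← hCa, ← hCd]
      simp [embGL2, diagGL2, unip, Matrix.GeneralLinearGroup.map, Units.val_mul,
        Matrix.mul_fin_two, map_fin_two, ← Polynomial.C_mul, mul_inv_cancel₀ ha, ← mul_assoc]
    rw [key]
    exact mul_mem (he _) (hu _)
  have step : ∀ n : ℕ, ∀ M : Matrix.GeneralLinearGroup (Fin 2) (Polynomial F),
      (M.1 1 0).natDegree ≤ n → M ∈ H := by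
    intro n
    induction n using Nat.strong_induction_on with
    | _ n ih =>
      intro M hMn
      by_cases hc : M.1 1 0 = 0
      · exact base M hc
      · set c := M.1 1 0 with hcdef
        set a := M.1 0 0 with hadef
        set q := a / c with hq
        set N := embGL2 F (wGL2 F) * unip (-q) * M with hN
        have hN10 : N.1 1 0 = -(a % c) := by
          have hmod : a % c = a - c * (a / c) := by
            rw [eq_sub_iff_add_eq, add_comm, EuclideanDomain.div_add_mod]
          rw [hmod]
          show ((embGL2 F (wGL2 F)).1 * (unip (-q)).1 * M.1) 1 0 = _
          rw [Matrix.eta_fin_two M.1]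
          simp [embGL2, wGL2, unip, Matrix.GeneralLinearGroup.map, Matrix.mul_fin_two, map_fin_two,
            ← hcdef, ← hadef, hq]
          ring
        have hNmem : N ∈ H := by
          by_cases hr : a % c = 0
          · exact base N (by rw [hN10, hr, neg_zero])
          · have hdeg : (a % c).degree < c.degree := EuclideanDomain.mod_lt _ hc
            have hlt : (a % c).natDegree < c.natDegree :=
              Polynomial.natDegree_lt_natDegree hr hdeg
            exact ih ((a % c).natDegree) (lt_of_lt_of_le hlt hMn) N
              (by rw [hN10, Polynomial.natDegree_neg])
        have hMeq : M = (embGL2 F (wGL2 F) * unip (-q))⁻¹ * N := by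
          rw [hN]; group
        rw [hMeq]
        exact mul_mem (inv_mem (mul_mem (he _) (hu _))) hNmem
  rw [eq_top_iff]
  intro M _
  exact step (M.1 1 0).natDegree M le_rfl
end
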